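/- Let A and B be Banach algebras, T ∈ hom(B, A), and φ ∈ σ(A). Then A is φ-inner amenable if and only if A ×_T B is (φ, φ∘T)-inner amenable. Specifically: if m ∈ A'' satisfies m(φ)=1 and m□a = a□m for all a ∈ A, then (m,0) is a (φ,φ∘T)-inner mean for A ×_T B; conversely if (m,n) is a (φ,φ∘T)-inner mean for A ×_T B then m + T''(n) is a φ-inner mean for A. -/

import Mathlib

open ContinuousLinearMap NormedSpace

variable {A B : Type*}
  [NonUnitalNormedRing A] [NormedSpace ℂ A] [IsScalarTower ℂ A A] [SMulCommClass ℂ A A]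
  [CompleteSpace A]
  [NonUnitalNormedRing B] [NormedSpace ℂ B] [IsScalarTower ℂ B B] [SMulCommClass ℂ B B]
  [CompleteSpace B]

/-- The morphism-product multiplication on `A × B`:
`(a₁,b₁)·(a₂,b₂) = (a₁a₂ + a₁T(b₂) + T(b₁)a₂, b₁b₂)`. -/
noncomputable def tMul (T : B →L[ℂ] A) (u v : A × B) : A × B :=
  (u.1 * v.1 + u.1 * T v.2 + T u.2 * v.1, u.2 * v.2)

/-- The ℓ¹ norm `‖(a,b)‖ = ‖a‖ + ‖b‖` on `A × B`. -/
noncomputable def tNorm (u : A × B) : ℝ := ‖u.1‖ + ‖u.2‖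

/-- Auxiliary map: for `Φ` in the second dual of `E` and a bundled bilinear
multiplication `M` on `E`, this is `f ↦ (a ↦ Φ (f ∘ M a))`, i.e. `f ↦ Φ · f`. -/
noncomputable def rAct {E : Type*} [NormedAddCommGroup E] [NormedSpace ℂ E]
    (M : E →L[ℂ] E →L[ℂ] E) (Φ : StrongDual ℂ (StrongDual ℂ E)) : StrongDual ℂ E →L[ℂ] StrongDual ℂ E :=
  (compL ℂ E (StrongDual ℂ E) ℂ Φ).comp
    (((compL ℂ E (E →L[ℂ] E) (StrongDual ℂ E)).flip M).comp (compL ℂ E E ℂ))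

/-- The first Arens product `Φ □ Ψ` on the second dual of `E`, where the
multiplication of `E` is given by the bundled bilinear map `M`:
`⟨Φ□Ψ, f⟩ = ⟨Φ, Ψ·f⟩` with `(Ψ·f)(a) = Ψ(f·a)` and `(f·a)(x) = f(ax)`. -/
noncomputable def arens1 {E : Type*} [NormedAddCommGroup E] [NormedSpace ℂ E]
    (M : E →L[ℂ] E →L[ℂ] E) (Φ Ψ : StrongDual ℂ (StrongDual ℂ E)) : StrongDual ℂ (StrongDual ℂ E) :=
  Φ.comp (rAct M Ψ)

/-- The second Arens product `Φ ◊ Ψ` on the second dual of `E`: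
`⟨Φ◊Ψ, f⟩ = ⟨Ψ, f·Φ⟩` with `(f·Φ)(a) = Φ(a·f)` and `(a·f)(x) = f(xa)`. -/
noncomputable def arens2 {E : Type*} [NormedAddCommGroup E] [NormedSpace ℂ E]
    (M : E →L[ℂ] E →L[ℂ] E) (Φ Ψ : StrongDual ℂ (StrongDual ℂ E)) : StrongDual ℂ (StrongDual ℂ E) :=
  Ψ.comp (rAct M.flip Φ)

/-- Bundled bilinear map `(u,v) ↦ M (f u) (g v)`. -/
noncomputable def bcomp {P E : Type*} [NormedAddCommGroup P] [NormedSpace ℂ P]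
    [NormedAddCommGroup E] [NormedSpace ℂ E]
    (M : E →L[ℂ] E →L[ℂ] E) (f g : P →L[ℂ] E) : P →L[ℂ] P →L[ℂ] E :=
  ((compL ℂ P E E).flip g).comp (M.comp f)

/-- The morphism-product multiplication `tMul T`, as a bundled bilinear map;
`tMulCLM T u v = tMul T u v`. -/
noncomputable def tMulCLM (T : B →L[ℂ] A) : (A × B) →L[ℂ] (A × B) →L[ℂ] (A × B) :=
  ((compL ℂ (A × B) A (A × B) (inl ℂ A B)).comp
    (bcomp (mul ℂ A) (fst ℂ A B) (fst ℂ A B + T.comp (snd ℂ A B)) +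
     bcomp (mul ℂ A) (T.comp (snd ℂ A B)) (fst ℂ A B))) +
  ((compL ℂ (A × B) B (A × B) (inr ℂ A B)).comp
    (bcomp (mul ℂ B) (snd ℂ A B) (snd ℂ A B)))

/-- The adjoint `T' : A' → B'`, `T'(f) = f ∘ T`. -/
noncomputable def dualT (T : B →L[ℂ] A) : StrongDual ℂ A →L[ℂ] StrongDual ℂ B := (compL ℂ B A ℂ).flip T

/-- The double adjoint `T'' : B'' → A''`, `T''(F) = F ∘ T'`. -/
noncomputable def ddT (T : B →L[ℂ] A) : StrongDual ℂ (StrongDual ℂ B) →L[ℂ] StrongDual ℂ (StrongDual ℂ A) :=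
  (compL ℂ (StrongDual ℂ A) (StrongDual ℂ B) ℂ).flip (dualT T)

/-- The identification `Θ : A'' × B'' → (A × B)''`, `Θ(Φ,Ψ)(F) = Φ(F∘inl) + Ψ(F∘inr)`,
i.e. `Θ(Φ,Ψ)(f,g) = Φ(f) + Ψ(g)` under the identification `(A × B)' ≅ A' × B'`. -/
noncomputable def Theta (Φ : StrongDual ℂ (StrongDual ℂ A)) (Ψ : StrongDual ℂ (StrongDual ℂ B)) :
    StrongDual ℂ (StrongDual ℂ (A × B)) :=
  Φ.comp ((compL ℂ A (A × B) ℂ).flip (inl ℂ A B)) +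
  Ψ.comp ((compL ℂ B (A × B) ℂ).flip (inr ℂ A B))

/-- The functional `(a,b) ↦ φ(a) + φ(T(b))` on `A × B`, for `φ : A → ℂ`. -/
noncomputable def charExt (T : B →L[ℂ] A) (φ : A →L[ℂ] ℂ) : (A × B) →L[ℂ] ℂ :=
  φ.comp (fst ℂ A B) + (φ.comp T).comp (snd ℂ A B)

/-- The functional `(a,b) ↦ ψ(b)` on `A × B`, for `ψ : B → ℂ`. -/
noncomputable def charSnd (ψ : B →L[ℂ] ℂ) : (A × B) →L[ℂ] ℂ :=
  ψ.comp (snd ℂ A B)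
set_option linter.unusedSectionVars false

lemma rAct_apply {E : Type*} [NormedAddCommGroup E] [NormedSpace ℂ E]
    (M : E →L[ℂ] E →L[ℂ] E) (Φ : StrongDual ℂ (StrongDual ℂ E)) (f : StrongDual ℂ E) (a : E) :
    rAct M Φ f a = Φ (f.comp (M a)) := rfl

lemma arens1_apply {E : Type*} [NormedAddCommGroup E] [NormedSpace ℂ E]
    (M : E →L[ℂ] E →L[ℂ] E) (Φ Ψ : StrongDual ℂ (StrongDual ℂ E)) (f : StrongDual ℂ E) :
    arens1 M Φ Ψ f = Φ (rAct M Ψ f) := rfl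

lemma Theta_apply (Φ : StrongDual ℂ (StrongDual ℂ A)) (Ψ : StrongDual ℂ (StrongDual ℂ B)) (G : StrongDual ℂ (A × B)) :
    Theta Φ Ψ G = Φ (G.comp (inl ℂ A B)) + Ψ (G.comp (inr ℂ A B)) := rfl

lemma ddT_apply (T : B →L[ℂ] A) (n : StrongDual ℂ (StrongDual ℂ B)) (g : StrongDual ℂ A) :
    ddT T n g = n (g.comp T) := rfl

lemma tMulCLM_apply (T : B →L[ℂ] A) (u v : A × B) : tMulCLM T u v = tMul T u v := by
  simp [tMulCLM, tMul, bcomp]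

lemma arens_comm_iff {E : Type*} [NormedAddCommGroup E] [NormedSpace ℂ E]
    (M : E →L[ℂ] E →L[ℂ] E) (m : StrongDual ℂ (StrongDual ℂ E)) (a : E) :
    (arens1 M m (inclusionInDoubleDual ℂ E a) = arens1 M (inclusionInDoubleDual ℂ E a) m)
      ↔ ∀ f : StrongDual ℂ E, m (f.comp (M.flip a)) = m (f.comp (M a)) := by
  rw [ContinuousLinearMap.ext_iff]
  refine forall_congr' fun f => ?_
  have h1 : arens1 M m (inclusionInDoubleDual ℂ E a) f = m (f.comp (M.flip a)) := rfl
  have h2 : arens1 M (inclusionInDoubleDual ℂ E a) m f = m (f.comp (M a)) := rfl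
  rw [h1, h2]

noncomputable def precompDual {E F : Type*} [NormedAddCommGroup E] [NormedSpace ℂ E]
    [NormedAddCommGroup F] [NormedSpace ℂ F] (S : E →L[ℂ] F) :
    StrongDual ℂ F →L[ℂ] StrongDual ℂ E := (compL ℂ E F ℂ).flip S

lemma precompDual_apply {E F : Type*} [NormedAddCommGroup E] [NormedSpace ℂ E]
    [NormedAddCommGroup F] [NormedSpace ℂ F] (S : E →L[ℂ] F) (g : StrongDual ℂ F) :
    precompDual S g = g.comp S := rfl

lemma Theta_decomp (M : StrongDual ℂ (StrongDual ℂ (A × B))) :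
    Theta (M.comp (precompDual (fst ℂ A B))) (M.comp (precompDual (snd ℂ A B))) = M := by
  refine ContinuousLinearMap.ext fun F => ?_
  have hsum : ((F.comp (inl ℂ A B)).comp (fst ℂ A B)) +
      ((F.comp (inr ℂ A B)).comp (snd ℂ A B)) = F := by
    refine ContinuousLinearMap.ext fun u => ?_
    show F (u.1, 0) + F (0, u.2) = F u
    rw [← map_add]
    simp
  have h1 : (M.comp (precompDual (fst ℂ A B))) (F.comp (inl ℂ A B)) =
      M ((F.comp (inl ℂ A B)).comp (fst ℂ A B)) := rfl
  have h2 : (M.comp (precompDual (snd ℂ A B))) (F.comp (inr ℂ A B)) =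
      M ((F.comp (inr ℂ A B)).comp (snd ℂ A B)) := rfl
  rw [Theta_apply, h1, h2, ← map_add, hsum]

/-- for `φ ∈ σ(A)`, `A` is `φ`-inner amenable iff `A ×_T B` is
`(φ,φ∘T)`-inner amenable; moreover if `m` is a `φ`-inner mean for `A` then `(m,0)` is
a `(φ,φ∘T)`-inner mean for `A ×_T B`, and if `(m,n)` is a `(φ,φ∘T)`-inner mean for
`A ×_T B` then `m + T''(n)` is a `φ`-inner mean for `A`. -/

theorem inner_amenable_charExt
    (T : B →L[ℂ] A) (hT : ∀ x y, T (x * y) = T x * T y) (hTn : ‖T‖ ≤ 1)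
    (φ : A →L[ℂ] ℂ) (hφ0 : φ ≠ 0) (hφm : ∀ x y : A, φ (x * y) = φ x * φ y) :
    ((∃ m : StrongDual ℂ (StrongDual ℂ A), m φ = 1 ∧
        ∀ a : A, arens1 (mul ℂ A) m (inclusionInDoubleDual ℂ A a) =
          arens1 (mul ℂ A) (inclusionInDoubleDual ℂ A a) m) ↔
      (∃ M : StrongDual ℂ (StrongDual ℂ (A × B)), M (charExt T φ) = 1 ∧
        ∀ u : A × B, arens1 (tMulCLM T) M (inclusionInDoubleDual ℂ (A × B) u) =
          arens1 (tMulCLM T) (inclusionInDoubleDual ℂ (A × B) u) M)) ∧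
    (∀ m : StrongDual ℂ (StrongDual ℂ A), m φ = 1 →
      (∀ a : A, arens1 (mul ℂ A) m (inclusionInDoubleDual ℂ A a) =
        arens1 (mul ℂ A) (inclusionInDoubleDual ℂ A a) m) →
      (Theta m (0 : StrongDual ℂ (StrongDual ℂ B)) (charExt T φ) = 1 ∧
        ∀ u : A × B,
          arens1 (tMulCLM T) (Theta m 0) (inclusionInDoubleDual ℂ (A × B) u) =
            arens1 (tMulCLM T) (inclusionInDoubleDual ℂ (A × B) u) (Theta m 0))) ∧
    (∀ (m : StrongDual ℂ (StrongDual ℂ A)) (n : StrongDual ℂ (StrongDual ℂ B)),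
      Theta m n (charExt T φ) = 1 →
      (∀ u : A × B,
        arens1 (tMulCLM T) (Theta m n) (inclusionInDoubleDual ℂ (A × B) u) =
          arens1 (tMulCLM T) (inclusionInDoubleDual ℂ (A × B) u) (Theta m n)) →
      ((m + ddT T n) φ = 1 ∧
        ∀ a : A, arens1 (mul ℂ A) (m + ddT T n) (inclusionInDoubleDual ℂ A a) =
          arens1 (mul ℂ A) (inclusionInDoubleDual ℂ A a) (m + ddT T n))) := by
  have e1 : (charExt T φ).comp (inl ℂ A B) = φ := by
    ext x; simp [charExt]
  have e2 : (charExt T φ).comp (inr ℂ A B) = φ.comp T := by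
    ext y; simp [charExt]
  have P2 : ∀ m : StrongDual ℂ (StrongDual ℂ A), m φ = 1 →
      (∀ a : A, arens1 (mul ℂ A) m (inclusionInDoubleDual ℂ A a) =
        arens1 (mul ℂ A) (inclusionInDoubleDual ℂ A a) m) →
      (Theta m (0 : StrongDual ℂ (StrongDual ℂ B)) (charExt T φ) = 1 ∧
        ∀ u : A × B,
          arens1 (tMulCLM T) (Theta m 0) (inclusionInDoubleDual ℂ (A × B) u) =
            arens1 (tMulCLM T) (inclusionInDoubleDual ℂ (A × B) u) (Theta m 0)) := by
    intro m hm1 hm2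
    have hm' : ∀ (c : A) (f : StrongDual ℂ A),
        m (f.comp ((mul ℂ A).flip c)) = m (f.comp (mul ℂ A c)) :=
      fun c => (arens_comm_iff (mul ℂ A) m c).mp (hm2 c)
    refine ⟨by simp [Theta_apply, e1, hm1], fun u => ?_⟩
    rw [arens_comm_iff]
    intro F
    rw [Theta_apply, Theta_apply]
    simp only [ContinuousLinearMap.zero_apply, add_zero]
    have c1 : (F.comp ((tMulCLM T).flip u)).comp (inl ℂ A B) =
        (F.comp (inl ℂ A B)).comp ((mul ℂ A).flip (u.1 + T u.2)) := by
      ext x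
      simp only [ContinuousLinearMap.comp_apply, ContinuousLinearMap.flip_apply,
        tMulCLM_apply, inl_apply]
      congr 1
      simp [tMul, Prod.ext_iff, mul_add]
    have c2 : (F.comp (tMulCLM T u)).comp (inl ℂ A B) =
        (F.comp (inl ℂ A B)).comp (mul ℂ A (u.1 + T u.2)) := by
      ext x
      simp only [ContinuousLinearMap.comp_apply, ContinuousLinearMap.flip_apply,
        tMulCLM_apply, inl_apply]
      congr 1
      simp [tMul, Prod.ext_iff, add_mul]
    rw [c1, c2]
    exact hm' (u.1 + T u.2) (F.comp (inl ℂ A B))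
  have P3 : ∀ (m : StrongDual ℂ (StrongDual ℂ A)) (n : StrongDual ℂ (StrongDual ℂ B)),
      Theta m n (charExt T φ) = 1 →
      (∀ u : A × B,
        arens1 (tMulCLM T) (Theta m n) (inclusionInDoubleDual ℂ (A × B) u) =
          arens1 (tMulCLM T) (inclusionInDoubleDual ℂ (A × B) u) (Theta m n)) →
      ((m + ddT T n) φ = 1 ∧
        ∀ a : A, arens1 (mul ℂ A) (m + ddT T n) (inclusionInDoubleDual ℂ A a) =
          arens1 (mul ℂ A) (inclusionInDoubleDual ℂ A a) (m + ddT T n)) := by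
    intro m n h1 h2
    rw [Theta_apply, e1, e2] at h1
    refine ⟨by simpa [ddT_apply] using h1, fun a => ?_⟩
    rw [arens_comm_iff]
    intro f
    have key := (arens_comm_iff (tMulCLM T) (Theta m n) ((a, 0) : A × B)).mp
      (h2 ((a, 0) : A × B)) ((f.comp (fst ℂ A B)))
    have c1 : (((f.comp (fst ℂ A B)).comp ((tMulCLM T).flip ((a, 0) : A × B))).comp
        (inl ℂ A B)) = f.comp ((mul ℂ A).flip a) := by
      ext x; simp [tMulCLM_apply, tMul]
    have c2 : (((f.comp (fst ℂ A B)).comp ((tMulCLM T).flip ((a, 0) : A × B))).comp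
        (inr ℂ A B)) = (f.comp ((mul ℂ A).flip a)).comp T := by
      ext y; simp [tMulCLM_apply, tMul]
    have c3 : (((f.comp (fst ℂ A B)).comp (tMulCLM T ((a, 0) : A × B))).comp
        (inl ℂ A B)) = f.comp (mul ℂ A a) := by
      ext x; simp [tMulCLM_apply, tMul]
    have c4 : (((f.comp (fst ℂ A B)).comp (tMulCLM T ((a, 0) : A × B))).comp
        (inr ℂ A B)) = (f.comp (mul ℂ A a)).comp T := by
      ext y; simp [tMulCLM_apply, tMul]
    rw [Theta_apply, Theta_apply, c1, c2, c3, c4] at key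
    simpa [ddT_apply] using key
  refine ⟨⟨fun ⟨m, hm1, hm2⟩ => ⟨Theta m 0, P2 m hm1 hm2⟩, ?_⟩, P2, P3⟩
  rintro ⟨M, hM1, hM2⟩
  have hTheta := Theta_decomp M
  refine ⟨M.comp (precompDual (fst ℂ A B)) + ddT T (M.comp (precompDual (snd ℂ A B))),
    P3 _ _ ?_ ?_⟩
  · rw [hTheta]; exact hM1
  · rw [hTheta]; exact hM2
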